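/- The restriction of the map f ↦ π(f) gives a bijection between N_0^{(r,n)}(n̲) (colored sequences with exactly n_j entries equal to j for each 0 ≤ j ≤ k, for a composition n̲ = (n_0,...,n_k) of n) and the quotient G^J = {γ ∈ G(r,n) : Des_G(γ) ⊆ {n_0, n_0+n_1, ..., n_0+...+n_{k−1}}}. -/

import Mathlib

open Finset

namespace Paper

/-- An element of `G(r,n) = ℤ_r ≀ S_n`: a pair (underlying permutation, color vector). -/
abbrev CPerm (r n : ℕ) := Equiv.Perm (Fin n) × (Fin n → Fin r)

/-- A colored sequence: values and colors. -/
abbrev CSeq (r n : ℕ) := (Fin n → ℕ) × (Fin n → Fin r)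

variable {r n : ℕ}

/-- The order on colored integers (value, color):
`n^{r-1} < ⋯ < n^1 < ⋯ < 1^{r-1} < ⋯ < 1^1 < 0 < 1 < ⋯ < n`.
`clt a b` means `a < b`. -/
def clt (a b : ℕ × ℕ) : Prop :=
  (0 < a.2 ∧ b.2 = 0) ∨
  (0 < a.2 ∧ 0 < b.2 ∧ (b.1 < a.1 ∨ (a.1 = b.1 ∧ b.2 < a.2))) ∨
  (a.2 = 0 ∧ b.2 = 0 ∧ a.1 < b.1)

instance (a b : ℕ × ℕ) : Decidable (clt a b) := by unfold clt; exact inferInstance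

/-- The colored entry of `γ` at (0-based) position `i`: value `σ(i)` (1-based) with its color. -/
def entry (γ : CPerm r n) (i : Fin n) : ℕ × ℕ := ((γ.1 i : ℕ) + 1, (γ.2 i : ℕ))

/-- Window value `γ(i)` for `i ∈ [0,n]` (1-based positions), with `γ(0) := 0`. -/
def wval (γ : CPerm r n) (i : ℕ) : ℕ × ℕ :=
  if h : 1 ≤ i ∧ i ≤ n then ((γ.1 ⟨i - 1, by omega⟩ : ℕ) + 1, (γ.2 ⟨i - 1, by omega⟩ : ℕ))
  else (0, 0)

/-- Descent set `Des_G(γ) = {i ∈ [0,n-1] : γ(i) > γ(i+1)}`, with `γ(0) := 0`. -/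
def DesG (γ : CPerm r n) : Finset ℕ :=
  (range n).filter fun i => clt (wval γ (i + 1)) (wval γ i)

def desG (γ : CPerm r n) : ℕ := (DesG γ).card

def majG (γ : CPerm r n) : ℕ := ∑ i ∈ DesG γ, i

def colG (γ : CPerm r n) : ℕ := ∑ i, (γ.2 i : ℕ)

/-- Number of inversions: pairs `i < j` with `γ(i) > γ(j)` in the colored order. -/
def invG (γ : CPerm r n) : ℕ :=
  ((univ : Finset (Fin n × Fin n)).filter fun p =>
    p.1 < p.2 ∧ clt (entry γ p.2) (entry γ p.1)).card

/-- Length `ℓ_G(γ) = inv(γ) + Σ_{c_i ≠ 0} (σ(i) + c_i - 1)` (σ(i) 1-based). -/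
def lenG (γ : CPerm r n) : ℕ :=
  invG γ + ∑ i ∈ univ.filter (fun i => (γ.2 i : ℕ) ≠ 0), ((γ.1 i : ℕ) + (γ.2 i : ℕ))

/-- Membership in `N_0^{(r,n)}`: a zero value has color 0. -/
def ValidSeq (f : CSeq r n) : Prop := ∀ i, f.1 i = 0 → (f.2 i : ℕ) = 0

/-- The defining property of `π(f) = γ = (c;σ)`:
`f_{σ(1)} ≤ … ≤ f_{σ(n)}`, `c_i(γ) = c_{σ(i)}(f)`, and `γ(i) < γ(i+1)` whenever
`f_{σ(i)} = f_{σ(i+1)}`. -/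
def isPi (f : CSeq r n) (γ : CPerm r n) : Prop :=
  (∀ i j : Fin n, i ≤ j → f.1 (γ.1 i) ≤ f.1 (γ.1 j)) ∧
  (∀ i, γ.2 i = f.2 (γ.1 i)) ∧
  (∀ i j : Fin n, (i : ℕ) + 1 = (j : ℕ) → f.1 (γ.1 i) = f.1 (γ.1 j) →
    clt (entry γ i) (entry γ j))

def maxf (f : CSeq r n) : ℕ := univ.sup f.1

def sumf (f : CSeq r n) : ℕ := ∑ i, f.1 i

/-- The partition `λ(f)` (relative to `γ = π(f)`), with values in `ℤ`:
`λ_i = f_{σ(i)} - #{j ∈ Des_G(γ) : j ≤ i-1}` (1-based `i`). -/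
def lamZ (f : CSeq r n) (γ : CPerm r n) (i : Fin n) : ℤ :=
  (f.1 (γ.1 i) : ℤ) - ((DesG γ).filter (· ≤ (i : ℕ))).card

/-- 1-based reading of an `n`-tuple, with value `0` at index `0` (and outside `[1,n]`). -/
def mval (μ : Fin n → ℕ) (i : ℕ) : ℕ :=
  if h : 1 ≤ i ∧ i ≤ n then μ ⟨i - 1, by omega⟩ else 0

/-- `μ` is `γ`-compatible: `μ_i < μ_{i+1}` for all `i ∈ Des_G(γ)` (with `μ_0 := 0`). -/
def compat (μ : Fin n → ℕ) (γ : CPerm r n) : Prop :=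
  ∀ i ∈ DesG γ, mval μ i < mval μ (i + 1)

/-- The skew inverse `γ̃⁻¹ = (c_{σ⁻¹(1)},…,c_{σ⁻¹(n)}; σ⁻¹)`. -/
def skewInv (γ : CPerm r n) : CPerm r n := (γ.1⁻¹, fun i => γ.2 (γ.1⁻¹ i))

/-- The group inverse: `γ⁻¹ = (c'; σ⁻¹)` with `c'_i = (r - c_{σ⁻¹(i)}) mod r`. -/
def cinv (γ : CPerm r n) : CPerm r n :=
  (γ.1⁻¹, fun i =>
    ⟨(r - (γ.2 (γ.1⁻¹ i) : ℕ)) % r,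
      Nat.mod_lt _ (Nat.lt_of_le_of_lt (Nat.zero_le _) (γ.2 (γ.1⁻¹ i)).isLt)⟩)

/-- The group law of `G(r,n)`: `(c;σ)·(d;τ) = ((d_i + c_{τ(i)}) mod r; στ)`. -/
def cmul (x y : CPerm r n) : CPerm r n :=
  (x.1 * y.1, fun i =>
    ⟨((y.2 i : ℕ) + (x.2 (y.1 i) : ℕ)) % r,
      Nat.mod_lt _ (Nat.lt_of_le_of_lt (Nat.zero_le _) (y.2 i).isLt)⟩)

/-- The color-forgetting projection `φ : G(r,n) → B_n = G(2,n)`. -/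
def phi (γ : CPerm r n) : CPerm 2 n := (γ.1, fun i => ⟨min (γ.2 i : ℕ) 1, by omega⟩)

/-- `[m]_p = 1 + p + ⋯ + p^{m-1}`. -/
def qint {R : Type*} [CommRing R] (p : R) (m : ℕ) : R := ∑ j ∈ range m, p ^ j

/-- `[m]_p! = [1]_p [2]_p ⋯ [m]_p`. -/
def qfact {R : Type*} [CommRing R] (p : R) (m : ℕ) : R := ∏ j ∈ range m, qint p (j + 1)

/-- `[m̂]_{b,p}! = (1+bp)(1+bp²)⋯(1+bp^m)·[m]_p!`. -/
def hqfact {R : Type*} [CommRing R] (b p : R) (m : ℕ) : R :=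
  (∏ i ∈ range m, (1 + b * p ^ (i + 1))) * qfact p m

/-- A formal power series in two variables `X 0, X 1` from its coefficients. -/
def seriesOf2 (F : ℕ → ℕ → ℚ) : MvPowerSeries (Fin 2) ℚ := fun d => F (d 0) (d 1)

/-- A formal power series in three variables from its coefficients. -/
def seriesOf3 (F : ℕ → ℕ → ℕ → ℚ) : MvPowerSeries (Fin 3) ℚ := fun d => F (d 0) (d 1) (d 2)


-- aux lemmas
lemma clt_asymm {a b : ℕ × ℕ} (h1 : clt a b) (h2 : clt b a) : False := by
  unfold clt at h1 h2; omega

lemma clt_total {a b : ℕ × ℕ} (h : a.1 ≠ b.1 ∨ a.2 ≠ b.2) : clt a b ∨ clt b a := by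
  unfold clt; omega

lemma clt_zero_iff (a : ℕ × ℕ) : clt a (0, 0) ↔ 0 < a.2 := by
  unfold clt; omega

lemma wval_zero (γ : CPerm r n) : wval γ 0 = (0, 0) := by
  unfold wval; rw [dif_neg]; omega

lemma wval_of_lt (γ : CPerm r n) (i : ℕ) (h : i < n) :
    wval γ (i + 1) = entry γ ⟨i, h⟩ := by
  unfold wval entry
  rw [dif_pos ⟨by omega, by omega⟩]
  rfl

lemma wval_of_gt (γ : CPerm r n) (i : ℕ) (h : n < i) : wval γ i = (0, 0) := by
  unfold wval; rw [dif_neg]; omega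

lemma mem_DesG {γ : CPerm r n} {i : ℕ} :
    i ∈ DesG γ ↔ i < n ∧ clt (wval γ (i + 1)) (wval γ i) := by
  unfold DesG; simp

lemma dcNat {T : Finset ℕ} (hdc : ∀ a b : ℕ, a ≤ b → b ∈ T → a ∈ T) (m : ℕ) :
    m ∈ T ↔ m < T.card := by
  constructor
  · intro hm
    have h1 : range (m + 1) ⊆ T := by
      intro a ha
      exact hdc a m (by simpa [Nat.lt_succ_iff] using ha) hm
    have := card_le_card h1
    simp only [card_range] at this
    omega
  · intro hm
    by_contra hmn
    have h2 : T ⊆ range m := by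
      intro y hy
      rw [mem_range]
      by_contra hy2
      exact hmn (hdc m y (by omega) hy)
    have := card_le_card h2
    simp only [card_range] at this
    omega

lemma noDesc_color (γ : CPerm r n) (p : ℕ)
    (h : ∀ i ≤ p, i ∉ DesG γ) : (wval γ (p + 1)).2 = 0 := by
  induction p with
  | zero =>
    have h0 := h 0 le_rfl
    rw [mem_DesG, wval_zero] at h0
    push_neg at h0
    rcases Nat.lt_or_ge 0 n with hn | hn
    · have h0' := h0 hn
      rw [clt_zero_iff] at h0'
      omega
    · rw [wval_of_gt γ (0 + 1) (by omega)]
  | succ q ih =>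
    have hq := ih (fun i hi => h i (by omega))
    rcases Nat.lt_or_ge (q + 1) n with hn | hn
    · have h1 := h (q + 1) le_rfl
      rw [mem_DesG] at h1
      push_neg at h1
      have h2 := h1 hn
      by_contra hcc
      exact h2 (Or.inl ⟨by omega, hq⟩)
    · rw [wval_of_gt γ (q + 1 + 1) (by omega)]

lemma exists_desc_of_color (γ : CPerm r n) (p : Fin n) (hc : 0 < (γ.2 p : ℕ)) :
    ∃ i ≤ (p : ℕ), i ∈ DesG γ := by
  by_contra h
  push_neg at h
  have hn := noDesc_color γ (p : ℕ) (fun i hi => h i hi)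
  rw [wval_of_lt γ p p.2] at hn
  simp only [entry, Fin.eta] at hn
  omega


lemma key_count {r n k : ℕ} (nc : ℕ → ℕ) (f : CSeq r n) (γ : CPerm r n)
    (hcard : ∀ j ≤ k, (univ.filter fun i => f.1 i = j).card = nc j)
    (hmono : ∀ i j : Fin n, i ≤ j → f.1 (γ.1 i) ≤ f.1 (γ.1 j))
    {j : ℕ} (hj : j ≤ k + 1) (x : Fin n) :
    f.1 (γ.1 x) < j ↔ (x : ℕ) < ∑ t ∈ range j, nc t := by
  classical
  set A : Finset (Fin n) := univ.filter (fun y => f.1 (γ.1 y) < j) with hA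
  have hcardA : A.card = ∑ t ∈ range j, nc t := by
    rw [Finset.card_eq_sum_card_fiberwise (f := fun y => f.1 (γ.1 y)) (t := range j)
      (fun y hy => by rw [hA, mem_coe, mem_filter] at hy; exact mem_coe.mpr (mem_range.mpr hy.2))]
    refine Finset.sum_congr rfl fun t ht => ?_
    rw [mem_range] at ht
    have h1 : A.filter (fun y => f.1 (γ.1 y) = t) = univ.filter (fun y => f.1 (γ.1 y) = t) := by
      ext y
      simp only [hA, filter_filter, mem_filter, mem_univ, true_and]
      omega
    rw [h1, ← hcard t (by omega)]
    apply Finset.card_bij (fun y _ => γ.1 y)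
    · intro a ha
      simp only [mem_filter, mem_univ, true_and] at ha ⊢
      exact ha
    · intro a _ b _ hab
      exact γ.1.injective hab
    · intro b hb2
      simp only [mem_filter, mem_univ, true_and] at hb2
      exact ⟨γ.1⁻¹ b, by simp [hb2], by simp⟩
  have hTdc : ∀ a b : ℕ, a ≤ b → b ∈ A.image Fin.val → a ∈ A.image Fin.val := by
    intro a b hab hbmem
    rw [mem_image] at hbmem ⊢
    obtain ⟨y, hy, rfl⟩ := hbmem
    rw [hA, mem_filter] at hy
    have han : a < n := lt_of_le_of_lt hab y.2
    refine ⟨⟨a, han⟩, ?_, rfl⟩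
    rw [hA, mem_filter]
    exact ⟨mem_univ _, lt_of_le_of_lt (hmono ⟨a, han⟩ y (by simpa [Fin.le_def] using hab)) hy.2⟩
  have hmem := dcNat hTdc (x : ℕ)
  rw [Finset.card_image_of_injective _ Fin.val_injective, hcardA] at hmem
  have hx : (x : ℕ) ∈ A.image Fin.val ↔ x ∈ A := by
    rw [mem_image]
    constructor
    · rintro ⟨y, hy, hyx⟩
      rwa [Fin.val_injective hyx] at hy
    · intro hxA
      exact ⟨x, hxA, rfl⟩
  rw [hx, hA, mem_filter] at hmem
  simpa using hmem



/-- equation (4.13): the restriction of `f ↦ π(f)` is a bijection between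
`N_0^{(r,n)}(n̲)` and the quotient
`G^J = {γ ∈ G(r,n) : Des_G(γ) ⊆ {n_0, n_0+n_1, …, n_0+⋯+n_{k−1}}}`. -/
theorem stmt11 (r n k : ℕ) (hr : 0 < r)
    (nc : ℕ → ℕ) (hnc : ∑ j ∈ range (k + 1), nc j = n)
    (π : CSeq r n → CPerm r n)
    (hπ : ∀ f, ValidSeq f → isPi f (π f) ∧ ∀ γ, isPi f γ → γ = π f) :
    Set.BijOn π
      {f : CSeq r n | ValidSeq f ∧ (∀ i, f.1 i ≤ k) ∧
        ∀ j ≤ k, (univ.filter fun i => f.1 i = j).card = nc j}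
      {γ : CPerm r n | ∀ i ∈ DesG γ,
        i ∈ (range k).image fun m => ∑ j ∈ range (m + 1), nc j} := by
  classical
  have hps_mono : ∀ a b : ℕ, a ≤ b → (∑ t ∈ range a, nc t) ≤ ∑ t ∈ range b, nc t :=
    fun a b hab => Finset.sum_le_sum_of_subset (Finset.range_subset_range.mpr hab)
  refine ⟨?_, ?_, ?_⟩
  · -- MapsTo
    rintro f ⟨hval, hbd, hcnt⟩
    simp only [Set.mem_setOf_eq]
    intro i hi
    obtain ⟨⟨hm1, hm2, hm3⟩, -⟩ := hπ f hval
    set γ := π f with hγ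
    rw [mem_DesG] at hi
    obtain ⟨hin, hclt⟩ := hi
    rw [Finset.mem_image]
    rcases Nat.eq_zero_or_pos i with rfl | hipos
    · -- i = 0
      rw [wval_zero, clt_zero_iff, wval_of_lt γ 0 hin] at hclt
      simp only [entry] at hclt
      have hfc : (f.2 (γ.1 ⟨0, hin⟩) : ℕ) ≠ 0 := by
        rw [← hm2 ⟨0, hin⟩]; omega
      have hv0 : f.1 (γ.1 ⟨0, hin⟩) ≠ 0 := fun h0 => hfc (hval _ h0)
      have hk : 0 < k := by have := hbd (γ.1 ⟨0, hin⟩); omega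
      have hkey := key_count nc f γ hcnt hm1 (j := 1) (by omega) ⟨0, hin⟩
      refine ⟨0, mem_range.mpr hk, ?_⟩
      have h00 : ((⟨0, hin⟩ : Fin n) : ℕ) = 0 := rfl
      rw [Finset.sum_range_one, h00] at hkey
      rw [Finset.sum_range_one]
      omega
    · obtain ⟨i', rfl⟩ : ∃ i', i = i' + 1 := ⟨i - 1, by omega⟩
      have hi'n : i' < n := by omega
      rw [wval_of_lt γ (i' + 1) hin, wval_of_lt γ i' hi'n] at hclt
      set a : Fin n := ⟨i', hi'n⟩ with hadef
      set b : Fin n := ⟨i' + 1, hin⟩ with hbdef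
      have hav : (a : ℕ) = i' := rfl
      have hbv : (b : ℕ) = i' + 1 := rfl
      have hle := hm1 a b (by simp [hadef, hbdef, Fin.le_def])
      have hne : f.1 (γ.1 a) ≠ f.1 (γ.1 b) := by
        intro heq
        exact clt_asymm (hm3 a b (by omega) heq) hclt
      have hlt : f.1 (γ.1 a) < f.1 (γ.1 b) := by omega
      have hmk : f.1 (γ.1 a) < k := lt_of_lt_of_le hlt (hbd _)
      have hka := key_count nc f γ hcnt hm1 (j := f.1 (γ.1 a) + 1) (by omega) a
      have hkb := key_count nc f γ hcnt hm1 (j := f.1 (γ.1 a) + 1) (by omega) b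
      refine ⟨f.1 (γ.1 a), mem_range.mpr hmk, ?_⟩
      have h1 : (a : ℕ) < ∑ t ∈ range (f.1 (γ.1 a) + 1), nc t := hka.mp (by omega)
      have h2 : ¬ ((b : ℕ) < ∑ t ∈ range (f.1 (γ.1 a) + 1), nc t) := fun h => by
        have := hkb.mpr h; omega
      omega
  · -- InjOn
    rintro f ⟨hval, hbd, hcnt⟩ f' ⟨hval', hbd', hcnt'⟩ heq
    obtain ⟨⟨hm1, hm2, hm3⟩, -⟩ := hπ f hval
    obtain ⟨⟨hm1', hm2', hm3'⟩, -⟩ := hπ f' hval'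
    set γ := π f with hγ
    rw [← heq] at hm1' hm2' hm3'
    have hvals : ∀ x : Fin n, f.1 (γ.1 x) = f'.1 (γ.1 x) := by
      intro x
      have h1 := key_count nc f γ hcnt hm1 (j := f.1 (γ.1 x) + 1)
        (by have := hbd (γ.1 x); omega) x
      have h2 := key_count nc f' γ hcnt' hm1' (j := f.1 (γ.1 x) + 1)
        (by have := hbd (γ.1 x); omega) x
      have h3 := key_count nc f γ hcnt hm1 (j := f'.1 (γ.1 x) + 1)
        (by have := hbd' (γ.1 x); omega) x
      have h4 := key_count nc f' γ hcnt' hm1' (j := f'.1 (γ.1 x) + 1)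
        (by have := hbd' (γ.1 x); omega) x
      omega
    have h5 : ∀ x, f.1 x = f'.1 x := fun x => by
      have := hvals (γ.1⁻¹ x); simpa using this
    have h6 : ∀ x, f.2 x = f'.2 x := fun x => by
      have := (hm2 (γ.1⁻¹ x)).symm.trans (hm2' (γ.1⁻¹ x))
      simpa using this
    exact Prod.ext (funext h5) (funext h6)
  · -- SurjOn
    intro γ hγT
    simp only [Set.mem_setOf_eq] at hγT
    set v₀ : ℕ → ℕ :=
      fun i => ((range k).filter fun m => (∑ t ∈ range (m + 1), nc t) ≤ i).card with hv₀
    have hv₀le : ∀ i, v₀ i ≤ k := by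
      intro i
      simp only [hv₀]
      exact le_trans (card_le_card (filter_subset _ _)) (by simp)
    have hv₀mono : ∀ a b : ℕ, a ≤ b → v₀ a ≤ v₀ b := by
      intro a b hab
      simp only [hv₀]
      apply card_le_card
      intro m hm
      rw [mem_filter] at hm ⊢
      exact ⟨hm.1, le_trans hm.2 hab⟩
    have hiff : ∀ m < k, ∀ i : ℕ, ((∑ t ∈ range (m + 1), nc t) ≤ i ↔ m < v₀ i) := by
      intro m hmk i
      have hdc : ∀ a b : ℕ, a ≤ b →
          b ∈ (range k).filter (fun m => (∑ t ∈ range (m + 1), nc t) ≤ i) →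
          a ∈ (range k).filter (fun m => (∑ t ∈ range (m + 1), nc t) ≤ i) := by
        intro a b hab hb
        rw [mem_filter, mem_range] at hb ⊢
        exact ⟨by omega, le_trans (hps_mono (a + 1) (b + 1) (by omega)) hb.2⟩
      have hd := dcNat hdc m
      simp only [hv₀]
      rw [← hd, mem_filter, mem_range]
      constructor
      · intro h; exact ⟨hmk, h⟩
      · intro h; exact h.2
    set f : CSeq r n := (fun x => v₀ ((γ.1⁻¹ x : Fin n) : ℕ), fun x => γ.2 (γ.1⁻¹ x)) with hf
    have hfγ : ∀ x : Fin n, f.1 (γ.1 x) = v₀ (x : ℕ) := by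
      intro x; simp [hf]
    have hval : ValidSeq f := by
      intro x hx0
      simp only [hf] at hx0 ⊢
      by_contra hc
      obtain ⟨i, hip, hides⟩ := exists_desc_of_color γ (γ.1⁻¹ x) (by omega)
      have hmem := hγT i hides
      simp only [Finset.mem_image, Finset.mem_range] at hmem
      obtain ⟨m, hmk, hmi⟩ := hmem
      have h2 := (hiff m hmk ((γ.1⁻¹ x : Fin n) : ℕ)).mp (by omega)
      omega
    have hbd : ∀ x, f.1 x ≤ k := fun x => by simp only [hf]; exact hv₀le _
    have hcnt : ∀ j ≤ k, (univ.filter fun x => f.1 x = j).card = nc j := by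
      intro j hjk
      have hchar : ∀ i < n,
          (v₀ i = j ↔ (∑ t ∈ range j, nc t) ≤ i ∧ i < ∑ t ∈ range (j + 1), nc t) := by
        intro i hin
        constructor
        · intro hvj
          refine ⟨?_, ?_⟩
          · rcases Nat.eq_zero_or_pos j with rfl | hj
            · simp
            · have hh := (hiff (j - 1) (by omega) i).mpr (by omega)
              rwa [show j - 1 + 1 = j by omega] at hh
          · rcases Nat.lt_or_ge j k with hjlt | hjge
            · by_contra hge
              have := (hiff j hjlt i).mp (by omega)
              omega
            · have hjk' : j = k := by omega
              subst hjk'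
              omega
        · rintro ⟨h1, h2⟩
          have hge : j ≤ v₀ i := by
            rcases Nat.eq_zero_or_pos j with rfl | hj
            · omega
            · have hh := (hiff (j - 1) (by omega) i).mp
                (by rwa [show j - 1 + 1 = j by omega])
              omega
          have hle : v₀ i ≤ j := by
            rcases Nat.lt_or_ge j k with hjlt | hjge
            · by_contra hgt
              have := (hiff j hjlt i).mpr (by omega)
              omega
            · have := hv₀le i
              omega
          omega
      have hstep1 : (univ.filter fun x : Fin n => f.1 x = j).card
          = (univ.filter fun x : Fin n => v₀ (x : ℕ) = j).card := by
        apply Finset.card_bij (fun x _ => γ.1⁻¹ x)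
        · intro x hx
          simp only [mem_filter, mem_univ, true_and] at hx ⊢
          simpa [hf] using hx
        · intro a _ b _ hab
          exact (Equiv.injective _) hab
        · intro b hb
          simp only [mem_filter, mem_univ, true_and] at hb
          exact ⟨γ.1 b, by simp [hf, hb], by simp⟩
      have hstep2 : (univ.filter fun x : Fin n => v₀ (x : ℕ) = j).card
          = ((range n).filter fun i => v₀ i = j).card := by
        apply Finset.card_bij (fun (x : Fin n) _ => (x : ℕ))
        · intro x hx
          simp only [mem_filter, mem_univ, true_and, mem_range] at hx ⊢
          exact ⟨x.2, hx⟩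
        · intro a _ b _ hab
          exact Fin.val_injective hab
        · intro b hb
          simp only [mem_filter, mem_range] at hb
          exact ⟨⟨b, hb.1⟩, by simp [hb.2], rfl⟩
      have hstep3 : (range n).filter (fun i => v₀ i = j)
          = Finset.Ico (∑ t ∈ range j, nc t) (∑ t ∈ range (j + 1), nc t) := by
        have hn1 : (∑ t ∈ range (j + 1), nc t) ≤ n := by
          rw [← hnc]; exact hps_mono (j + 1) (k + 1) (by omega)
        ext i
        simp only [mem_filter, mem_range, Finset.mem_Ico]
        constructor
        · rintro ⟨hh1, hh2⟩
          exact (hchar i hh1).mp hh2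
        · rintro ⟨hh1, hh2⟩
          have hin : i < n := by omega
          exact ⟨hin, (hchar i hin).mpr ⟨hh1, hh2⟩⟩
      rw [hstep1, hstep2, hstep3, Nat.card_Ico, Finset.sum_range_succ]
      omega
    have hpi : isPi f γ := by
      refine ⟨?_, ?_, ?_⟩
      · intro a b hab
        rw [hfγ, hfγ]
        exact hv₀mono _ _ hab
      · intro x
        simp [hf]
      · intro a b hab heqv
        have hbn : (a : ℕ) + 1 < n := by rw [hab]; exact b.2
        have hne : (entry γ a).1 ≠ (entry γ b).1 := by
          simp only [entry]
          intro hh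
          have hg1 : γ.1 a = γ.1 b := Fin.val_injective (by omega)
          have hg2 : a = b := γ.1.injective hg1
          rw [hg2] at hab
          omega
        rcases clt_total (Or.inl hne) with h | h
        · exact h
        · exfalso
          have hdes : (a : ℕ) + 1 ∈ DesG γ := by
            rw [mem_DesG]
            refine ⟨hbn, ?_⟩
            rw [wval_of_lt γ ((a : ℕ) + 1) hbn, wval_of_lt γ (a : ℕ) a.2]
            have e1 : (⟨(a : ℕ) + 1, hbn⟩ : Fin n) = b := Fin.ext hab
            have e2 : (⟨(a : ℕ), a.2⟩ : Fin n) = a := Fin.ext rfl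
            rw [e1, e2]
            exact h
          have hmem := hγT _ hdes
          simp only [Finset.mem_image, Finset.mem_range] at hmem
          obtain ⟨m, hmk, hmi⟩ := hmem
          have h1 := (hiff m hmk ((a : ℕ) + 1)).mp (by omega)
          have h2 : ¬ (m < v₀ (a : ℕ)) := by
            rw [← hiff m hmk (a : ℕ)]
            omega
          rw [hfγ, hfγ] at heqv
          rw [← hab] at heqv
          omega
    obtain ⟨-, huniq⟩ := hπ f hval
    exact ⟨f, ⟨hval, hbd, hcnt⟩, (huniq γ hpi).symm⟩

end Paper
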